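/- Let K be a field of characteristic ≠ 2 and s ≤ r ≤ m ≤ n. Then every affine subspace S of K^{m×n} with min{rk(A): A∈S} = s and max{rk(A): A∈S} = r satisfies dim S ≤ mn − (m−r)·r. -/

import Mathlib

open Module Submodule LinearMap

section core
variable {K : Type*} [Field K] {X N Z : Type*}
  [AddCommGroup X] [Module K X] [AddCommGroup N] [Module K N] [AddCommGroup Z] [Module K Z]
  [FiniteDimensional K X] [FiniteDimensional K N] [FiniteDimensional K Z]

lemma core_isotropy (hZN : finrank K Z ≤ finrank K N)
    (U : Submodule K ((X →ₗ[K] Z) × (N →ₗ[K] X)))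
    (hU : ∀ p ∈ U, ∀ q ∈ U, p.1 ∘ₗ q.2 + q.1 ∘ₗ p.2 = 0) :
    finrank K U ≤ finrank K X * finrank K N := by
  classical
  set Δ : Submodule K X := ⨆ p : U, LinearMap.range (p : (X →ₗ[K] Z) × (N →ₗ[K] X)).2 with hΔ
  have hmemΔ : ∀ u : U, LinearMap.range (u : (X →ₗ[K] Z) × (N →ₗ[K] X)).2 ≤ Δ := fun u =>
    le_iSup (fun p : U => LinearMap.range (p : (X →ₗ[K] Z) × (N →ₗ[K] X)).2) u
  obtain ⟨Δ', hΔ'⟩ := Submodule.exists_isCompl Δ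
  -- the map sending u to its second component, corestricted to Δ
  let Φr : U →ₗ[K] (N →ₗ[K] Δ) :=
    { toFun := fun u => LinearMap.codRestrict Δ (u : (X →ₗ[K] Z) × (N →ₗ[K] X)).2
        (fun n => hmemΔ u ⟨n, rfl⟩)
      map_add' := by intro a b; ext n; simp
      map_smul' := by intro c a; ext n; simp }
  have hrk := LinearMap.finrank_range_add_finrank_ker Φr
  -- kernel elements have vanishing second component
  have hker2 : ∀ u : U, u ∈ LinearMap.ker Φr → (u : (X →ₗ[K] Z) × (N →ₗ[K] X)).2 = 0 := by
    intro u hu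
    ext n
    have h := LinearMap.congr_fun (LinearMap.mem_ker.1 hu) n
    simpa [Φr, Subtype.ext_iff] using h
  -- and their first component kills Δ
  have hker1 : ∀ u : U, u ∈ LinearMap.ker Φr →
      Δ ≤ LinearMap.ker (u : (X →ₗ[K] Z) × (N →ₗ[K] X)).1 := by
    intro u hu
    rw [hΔ]
    refine iSup_le fun q => LinearMap.range_le_ker_iff.2 ?_
    have h := hU _ u.2 _ q.2
    rw [hker2 u hu] at h
    simpa using h
  -- bound the kernel
  have hkerle : finrank K (LinearMap.ker Φr) ≤ finrank K Δ' * finrank K Z := by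
    let Ψ : (LinearMap.ker Φr) →ₗ[K] (Δ' →ₗ[K] Z) :=
      { toFun := fun u => ((u : U) : (X →ₗ[K] Z) × (N →ₗ[K] X)).1 ∘ₗ Δ'.subtype
        map_add' := by intro a b; ext x; simp
        map_smul' := by intro c a; ext x; simp }
    have hinj : Function.Injective Ψ := by
      intro a b hab
      have h1 : ((a : U) : (X →ₗ[K] Z) × (N →ₗ[K] X)).1 =
          ((b : U) : (X →ₗ[K] Z) × (N →ₗ[K] X)).1 := by
        ext x
        obtain ⟨y, hy, z, hz, rfl⟩ := Submodule.mem_sup.1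
          (by rw [hΔ'.codisjoint.eq_top]; exact Submodule.mem_top : x ∈ Δ ⊔ Δ')
        have hay := hker1 a a.2 hy
        have hby := hker1 b b.2 hy
        have := congrArg (fun F => F (⟨z, hz⟩ : Δ')) hab
        simp only [Ψ, LinearMap.coe_mk, AddHom.coe_mk, LinearMap.comp_apply,
          Submodule.coe_subtype] at this
        simp only [map_add, LinearMap.mem_ker.1 hay, LinearMap.mem_ker.1 hby, this, zero_add]
      have h2 : ((a : U) : (X →ₗ[K] Z) × (N →ₗ[K] X)).2 =
          ((b : U) : (X →ₗ[K] Z) × (N →ₗ[K] X)).2 := by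
        rw [hker2 a a.2, hker2 b b.2]
      exact Subtype.ext (Subtype.ext (Prod.ext h1 h2))
    calc finrank K (LinearMap.ker Φr) ≤ finrank K (Δ' →ₗ[K] Z) :=
          LinearMap.finrank_le_finrank_of_injective hinj
      _ = finrank K Δ' * finrank K Z := Module.finrank_linearMap _ _ _ _
  have hrangele : finrank K (LinearMap.range Φr) ≤ finrank K N * finrank K Δ :=
    (Submodule.finrank_le _).trans_eq (Module.finrank_linearMap _ _ _ _)
  have hsum := finrank_add_eq_of_isCompl hΔ'
  have hΔX : finrank K Δ ≤ finrank K X := Submodule.finrank_le _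
  calc finrank K U = finrank K (LinearMap.range Φr) + finrank K (LinearMap.ker Φr) := hrk.symm
    _ ≤ finrank K N * finrank K Δ + finrank K Δ' * finrank K Z := by
        exact Nat.add_le_add hrangele hkerle
    _ ≤ finrank K N * finrank K Δ + finrank K Δ' * finrank K N := by
        exact Nat.add_le_add_left (Nat.mul_le_mul_left _ hZN) _
    _ ≤ finrank K X * finrank K N := by nlinarith [hsum, hΔX]

end core



section main
variable {K : Type*} [Field K] {V₁ V₂ : Type*}
  [AddCommGroup V₁] [Module K V₁] [AddCommGroup V₂] [Module K V₂]
  [FiniteDimensional K V₁] [FiniteDimensional K V₂]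


set_option maxHeartbeats 2000000 in
lemma main_bound (f : V₁ →ₗ[K] V₂) {r : ℕ} (hr : finrank K (LinearMap.range f) = r)
    (hmn : finrank K V₂ ≤ finrank K V₁)
    (W : Submodule K (V₁ →ₗ[K] V₂))
    (hW : ∀ g ∈ W, finrank K (LinearMap.range (f + g)) ≤ r) :
    finrank K W ≤ finrank K V₁ * finrank K V₂ - (finrank K V₂ - r) * r := by
  classical
  set Nk := LinearMap.ker f with hNk
  set R := LinearMap.range f with hRdef
  obtain ⟨X, hX⟩ := Submodule.exists_isCompl Nk
  obtain ⟨Z, hZ⟩ := Submodule.exists_isCompl R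
  set πR : V₂ →ₗ[K] R := Submodule.linearProjOfIsCompl R Z hZ with hπR
  set πZ : V₂ →ₗ[K] Z := Submodule.linearProjOfIsCompl Z R hZ.symm with hπZ
  have hdec : ∀ v : V₂, (↑(πR v) : V₂) + ↑(πZ v) = v := fun v =>
    Submodule.projection_add_projection_eq_self hZ v
  -- the isomorphism φ : X ≃ R induced by f
  let fX : X →ₗ[K] R := (f.domRestrict X).codRestrict R (fun c => ⟨(c : V₁), rfl⟩)
  have hfXinj : Function.Injective fX := by
    intro a b hab
    have h1 : f ↑a = f ↑b := congrArg Subtype.val hab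
    have h2 : (↑(a - b) : V₁) ∈ Nk ⊓ X := by
      refine Submodule.mem_inf.2 ⟨LinearMap.mem_ker.2 ?_, (a - b).2⟩
      push_cast
      rw [map_sub, h1, sub_self]
    rw [hX.inf_eq_bot] at h2
    have h3 : (↑(a - b) : V₁) = 0 := (Submodule.mem_bot K).1 h2
    have h4 : a - b = 0 := Subtype.ext h3
    exact sub_eq_zero.1 h4
  have hfXsurj : Function.Surjective fX := by
    rintro ⟨y, hy⟩
    obtain ⟨v, rfl⟩ := hy
    obtain ⟨a, ha, b, hb, rfl⟩ := Submodule.mem_sup.1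
      (by rw [hX.codisjoint.eq_top]; exact Submodule.mem_top : v ∈ Nk ⊔ X)
    refine ⟨⟨b, hb⟩, Subtype.ext ?_⟩
    have ha' : f a = 0 := ha
    show f b = f (a + b)
    rw [map_add, ha', zero_add]
  let φ : X ≃ₗ[K] R := LinearEquiv.ofBijective fX ⟨hfXinj, hfXsurj⟩
  have hφ : ∀ x : X, (↑(φ x) : V₂) = f ↑x := fun x => rfl
  have hXr : finrank K X = r := by rw [φ.finrank_eq]; exact hr
  -- block decomposition facts
  have hgX : ∀ g : V₁ →ₗ[K] V₂, πR ∘ₗ g ∘ₗ X.subtype = 0 → ∀ x : X, g ↑x = ↑(πZ (g ↑x)) := by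
    intro g h0 x
    have h1 : πR (g ↑x) = 0 := LinearMap.congr_fun h0 x
    have h2 := hdec (g ↑x)
    rw [h1] at h2
    simpa using h2.symm
  have hgN : ∀ g : V₁ →ₗ[K] V₂, πZ ∘ₗ g ∘ₗ Nk.subtype = 0 → ∀ ν : Nk, g ↑ν = ↑(πR (g ↑ν)) := by
    intro g h0 ν
    have h1 : πZ (g ↑ν) = 0 := LinearMap.congr_fun h0 ν
    have h2 := hdec (g ↑ν)
    rw [h1] at h2
    simpa using h2.symm
  -- the two "block" linear assignments
  set Cm : (V₁ →ₗ[K] V₂) → (R →ₗ[K] Z) :=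
    fun g => πZ ∘ₗ g ∘ₗ (X.subtype ∘ₗ (φ.symm : R →ₗ[K] X)) with hCm
  set Dm : (V₁ →ₗ[K] V₂) → (Nk →ₗ[K] R) := fun g => πR ∘ₗ g ∘ₗ Nk.subtype with hDm
  -- Key step : product vanishing for elements with vanishing diagonal blocks
  have key : ∀ g ∈ W, πR ∘ₗ g ∘ₗ X.subtype = 0 → πZ ∘ₗ g ∘ₗ Nk.subtype = 0 →
      (Cm g) ∘ₗ (Dm g) = 0 := by
    intro g hgW h11 h22
    ext ν
    set D : R := πR (g ↑ν) with hD
    set x0 : X := φ.symm D with hx0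
    suffices hgoal : πZ (g ↑x0) = 0 by
      simp [hCm, hDm, ← hD, ← hx0, hgoal]
    set z : Z := πZ (g ↑x0) with hz
    by_contra hzne
    have hA1inj : Function.Injective ((f + g) ∘ₗ X.subtype) := by
      rw [← LinearMap.ker_eq_bot, Submodule.eq_bot_iff]
      rintro x hx
      have hx0' : f ↑x + g ↑x = 0 := hx
      have hfx : f ↑x ∈ R ⊓ Z := by
        refine ⟨LinearMap.mem_range_self f _, ?_⟩
        have : f ↑x = -(g ↑x) := eq_neg_of_add_eq_zero_left hx0'
        rw [this, hgX g h11 x]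
        exact Z.neg_mem (πZ (g ↑x)).2
      rw [hZ.inf_eq_bot] at hfx
      have hfx0 : f ↑x = 0 := (Submodule.mem_bot K).1 hfx
      have hxm : (↑x : V₁) ∈ Nk ⊓ X := ⟨hfx0, x.2⟩
      rw [hX.inf_eq_bot] at hxm
      exact Subtype.ext ((Submodule.mem_bot K).1 hxm)
    have hv0 : (f + g) ((↑ν : V₁) - ↑x0) = -(↑z : V₂) := by
      have e1 : f (↑ν : V₁) = 0 := ν.2
      have e2 : g (↑ν : V₁) = ↑D := by rw [hgN g h22 ν]
      have e3 : f (↑x0 : V₁) = ↑D := by rw [← hφ x0, hx0, φ.apply_symm_apply]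
      have e4 : g (↑x0 : V₁) = ↑z := by rw [hgX g h11 x0]
      simp only [LinearMap.add_apply, map_sub, e1, e2, e3, e4]
      abel
    have hzrange : (↑z : V₂) ∈ LinearMap.range (f + g) :=
      ⟨-((↑ν : V₁) - ↑x0), by rw [map_neg, hv0, neg_neg]⟩
    have hznotin : (↑z : V₂) ∉ LinearMap.range ((f + g) ∘ₗ X.subtype) := by
      rintro ⟨x, hx⟩
      have hx' : f ↑x + g ↑x = ↑z := hx
      have hfx : f ↑x ∈ R ⊓ Z := by
        refine ⟨LinearMap.mem_range_self f _, ?_⟩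
        have : f ↑x = ↑z - g ↑x := eq_sub_of_add_eq hx'
        rw [this, hgX g h11 x]
        exact Z.sub_mem z.2 (πZ (g ↑x)).2
      rw [hZ.inf_eq_bot] at hfx
      have hfx0 : f ↑x = 0 := (Submodule.mem_bot K).1 hfx
      have hxm : (↑x : V₁) ∈ Nk ⊓ X := ⟨hfx0, x.2⟩
      rw [hX.inf_eq_bot] at hxm
      have hx0'' : (↑x : V₁) = 0 := (Submodule.mem_bot K).1 hxm
      apply hzne
      have : (↑z : V₂) = 0 := by
        rw [← hx', hx0'']
        simp
      exact Subtype.ext this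
    have hlt : LinearMap.range ((f + g) ∘ₗ X.subtype) <
        LinearMap.range ((f + g) ∘ₗ X.subtype) ⊔ (K ∙ (↑z : V₂)) := by
      refine lt_of_le_of_ne le_sup_left fun hEq => hznotin ?_
      rw [hEq]
      exact Submodule.mem_sup_right (Submodule.mem_span_singleton_self _)
    have hle : LinearMap.range ((f + g) ∘ₗ X.subtype) ⊔ (K ∙ (↑z : V₂)) ≤
        LinearMap.range (f + g) :=
      sup_le (LinearMap.range_comp_le_range _ _)
        ((Submodule.span_singleton_le_iff_mem _ _).2 hzrange)
    have h1 := Submodule.finrank_lt_finrank_of_lt hlt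
    have h2 : finrank K (LinearMap.range ((f + g) ∘ₗ X.subtype)) = r := by
      rw [LinearMap.finrank_range_of_inj hA1inj, hXr]
    have h3 := Submodule.finrank_mono hle
    have h4 := hW g hgW
    omega
  -- the diagonal-blocks map
  set Ψ : (V₁ →ₗ[K] V₂) →ₗ[K] ((X →ₗ[K] R) × (Nk →ₗ[K] Z)) :=
    { toFun := fun g => (πR ∘ₗ g ∘ₗ X.subtype, πZ ∘ₗ g ∘ₗ Nk.subtype)
      map_add' := fun a b => by
        ext x <;> simp [LinearMap.add_comp, LinearMap.comp_add]
      map_smul' := fun c a => by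
        ext x <;> simp } with hΨ
  set Θ : (V₁ →ₗ[K] V₂) →ₗ[K] ((R →ₗ[K] Z) × (Nk →ₗ[K] R)) :=
    { toFun := fun g => (Cm g, Dm g)
      map_add' := fun a b => by
        ext x <;> simp [hCm, hDm, LinearMap.add_comp, LinearMap.comp_add]
      map_smul' := fun c a => by
        ext x <;> simp [hCm, hDm] } with hΘ
  set Ψ' : W →ₗ[K] ((X →ₗ[K] R) × (Nk →ₗ[K] Z)) := Ψ ∘ₗ W.subtype with hΨ'
  set Θ' : (LinearMap.ker Ψ') →ₗ[K] ((R →ₗ[K] Z) × (Nk →ₗ[K] R)) :=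
    Θ ∘ₗ W.subtype ∘ₗ (LinearMap.ker Ψ').subtype with hΘ'
  have hmemker : ∀ u : LinearMap.ker Ψ',
      πR ∘ₗ (↑(↑u : W) : V₁ →ₗ[K] V₂) ∘ₗ X.subtype = 0 ∧
      πZ ∘ₗ (↑(↑u : W) : V₁ →ₗ[K] V₂) ∘ₗ Nk.subtype = 0 := by
    intro u
    have h : Ψ' ↑u = 0 := LinearMap.mem_ker.1 u.2
    have h' : (πR ∘ₗ (↑(↑u : W) : V₁ →ₗ[K] V₂) ∘ₗ X.subtype,
        πZ ∘ₗ (↑(↑u : W) : V₁ →ₗ[K] V₂) ∘ₗ Nk.subtype) =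
        ((0 : X →ₗ[K] R), (0 : Nk →ₗ[K] Z)) := h
    exact ⟨congrArg Prod.fst h', congrArg Prod.snd h'⟩
  have hΘ'ker : ∀ u, Θ' u = 0 → u = 0 := by
    rintro u hu
    set g : V₁ →ₗ[K] V₂ := ↑(↑u : W) with hg
    obtain ⟨h11, h22⟩ := hmemker u
    have hu' : (Cm g, Dm g) = ((0 : R →ₗ[K] Z), (0 : Nk →ₗ[K] R)) := hu
    have hc := congrArg Prod.fst hu'
    have hd := congrArg Prod.snd hu'
    simp only [hCm, hDm] at hc hd
    have hgzero : g = 0 := by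
      ext v
      obtain ⟨a, ha, b, hb, rfl⟩ := Submodule.mem_sup.1
        (by rw [hX.codisjoint.eq_top]; exact Submodule.mem_top : v ∈ Nk ⊔ X)
      have hga : g a = 0 := by
        have p1 : πR (g a) = 0 := LinearMap.congr_fun hd (⟨a, ha⟩ : Nk)
        have p2 : πZ (g a) = 0 := LinearMap.congr_fun h22 (⟨a, ha⟩ : Nk)
        have := hdec (g a)
        rw [p1, p2] at this
        simpa using this.symm
      have hgb : g b = 0 := by
        have p1 : πR (g b) = 0 := LinearMap.congr_fun h11 (⟨b, hb⟩ : X)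
        have p2 : πZ (g b) = 0 := by
          have := LinearMap.congr_fun hc (φ (⟨b, hb⟩ : X))
          simpa [LinearEquiv.symm_apply_apply] using this
        have := hdec (g b)
        rw [p1, p2] at this
        simpa using this.symm
      rw [map_add, hga, hgb, add_zero]
      rfl
    exact Subtype.ext (Subtype.ext hgzero)
  have hΘ'inj : Function.Injective Θ' :=
    fun a b hab => sub_eq_zero.1 (hΘ'ker _ (by rw [map_sub, hab, sub_self]))
  -- the image satisfies the isotropy condition
  have hUcond : ∀ p ∈ LinearMap.range Θ', ∀ q ∈ LinearMap.range Θ',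
      p.1 ∘ₗ q.2 + q.1 ∘ₗ p.2 = 0 := by
    rintro p ⟨u, rfl⟩ q ⟨w, rfl⟩
    set g : V₁ →ₗ[K] V₂ := ↑(↑u : W) with hgdef
    set g' : V₁ →ₗ[K] V₂ := ↑(↑w : W) with hg'def
    have hgW : g ∈ W := (↑u : W).2
    have hg'W : g' ∈ W := (↑w : W).2
    obtain ⟨hu11, hu22⟩ := hmemker u
    obtain ⟨hw11, hw22⟩ := hmemker w
    have k1 : Cm g ∘ₗ Dm g = 0 := key g hgW hu11 hu22
    have k2 : Cm g' ∘ₗ Dm g' = 0 := key g' hg'W hw11 hw22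
    have hsum11 : πR ∘ₗ (g + g') ∘ₗ X.subtype = 0 := by
      ext x
      have a1 : πR (g ↑x) = 0 := LinearMap.congr_fun hu11 x
      have a2 : πR (g' ↑x) = 0 := LinearMap.congr_fun hw11 x
      simp [LinearMap.add_apply, map_add, a1, a2]
    have hsum22 : πZ ∘ₗ (g + g') ∘ₗ Nk.subtype = 0 := by
      ext x
      have a1 : πZ (g ↑x) = 0 := LinearMap.congr_fun hu22 x
      have a2 : πZ (g' ↑x) = 0 := LinearMap.congr_fun hw22 x
      simp [LinearMap.add_apply, map_add, a1, a2]
    have k3 : Cm (g + g') ∘ₗ Dm (g + g') = 0 :=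
      key (g + g') (W.add_mem hgW hg'W) hsum11 hsum22
    have hCadd : Cm (g + g') = Cm g + Cm g' := by
      simp only [hCm]
      rw [LinearMap.add_comp, LinearMap.comp_add]
    have hDadd : Dm (g + g') = Dm g + Dm g' := by
      simp only [hDm]
      rw [LinearMap.add_comp, LinearMap.comp_add]
    rw [hCadd, hDadd, LinearMap.add_comp, LinearMap.comp_add, LinearMap.comp_add,
      k1, k2] at k3
    have hθu : Θ' u = (Cm g, Dm g) := rfl
    have hθw : Θ' w = (Cm g', Dm g') := rfl
    rw [hθu, hθw]
    show Cm g ∘ₗ Dm g' + Cm g' ∘ₗ Dm g = 0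
    abel_nf at k3 ⊢
    exact k3
  -- assemble the dimension count
  have e1 := LinearMap.finrank_range_add_finrank_ker f
  rw [← hRdef, ← hNk] at e1
  have e2 := Submodule.finrank_add_eq_of_isCompl hZ
  have hZN : finrank K Z ≤ finrank K Nk := by omega
  have hcore := core_isotropy hZN (LinearMap.range Θ') hUcond
  have hkerrk : finrank K (LinearMap.ker Ψ') = finrank K (LinearMap.range Θ') :=
    (LinearMap.finrank_range_of_inj hΘ'inj).symm
  have hsplit := LinearMap.finrank_range_add_finrank_ker Ψ'
  have hrange : finrank K (LinearMap.range Ψ') ≤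
      finrank K ((X →ₗ[K] R) × (Nk →ₗ[K] Z)) := Submodule.finrank_le _
  have hprod : finrank K ((X →ₗ[K] R) × (Nk →ₗ[K] Z)) =
      finrank K X * finrank K R + finrank K Nk * finrank K Z := by
    rw [Module.finrank_prod, Module.finrank_linearMap _ _ _ _, Module.finrank_linearMap _ _ _ _]
  set aa := finrank K Z with haa
  set bb := finrank K Nk with hbb
  have hWle : finrank K W ≤ r * r + bb * aa + r * bb := by
    rw [hprod, hXr, hr] at hrange
    rw [hr] at hcore
    omega
  have hmm : finrank K V₂ = r + aa := by omega
  have hnn : finrank K V₁ = r + bb := by omega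
  rw [hmm, hnn, Nat.add_sub_cancel_left]
  refine hWle.trans (Nat.le_sub_of_add_le (le_of_eq ?_))
  ring

end main


theorem stmt15 (K : Type*) [Field K] (hchar : ringChar K ≠ 2) (m n r s : ℕ)
    (hsr : s ≤ r) (hrm : r ≤ m) (hmn : m ≤ n)
    (S : AffineSubspace K (Matrix (Fin m) (Fin n) K))
    (hmin : IsLeast {k : ℕ | ∃ A ∈ S, A.rank = k} s)
    (hmax : IsGreatest {k : ℕ | ∃ A ∈ S, A.rank = k} r) :
    Module.finrank K S.direction ≤ m * n - (m - r) * r := by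
  classical
  obtain ⟨⟨A₀, hA₀S, hA₀r⟩, hub⟩ := hmax
  set T : Matrix (Fin m) (Fin n) K ≃ₗ[K] ((Fin n → K) →ₗ[K] (Fin m → K)) := Matrix.toLin'
    with hT
  set f : (Fin n → K) →ₗ[K] (Fin m → K) := T A₀ with hf
  have hTapp : ∀ B : Matrix (Fin m) (Fin n) K, T B = B.mulVecLin := fun B =>
    Matrix.toLin'_apply' B
  have hrank : finrank K (LinearMap.range f) = r := by
    rw [hf, hTapp A₀]
    exact hA₀r
  set W : Submodule K ((Fin n → K) →ₗ[K] (Fin m → K)) :=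
    S.direction.map (T : Matrix (Fin m) (Fin n) K →ₗ[K] _) with hWdef
  have hfr : finrank K S.direction = finrank K W :=
    (LinearEquiv.finrank_map_eq T S.direction).symm
  have hWcond : ∀ g ∈ W, finrank K (LinearMap.range (f + g)) ≤ r := by
    rintro g ⟨B, hB, rfl⟩
    have hmem : B + A₀ ∈ S := AffineSubspace.vadd_mem_of_mem_direction hB hA₀S
    have hrk : (B + A₀).rank ≤ r := hub ⟨B + A₀, hmem, rfl⟩
    have hfg : f + T B = T (B + A₀) := by rw [map_add, hf, add_comm]
    simp only [LinearEquiv.coe_coe]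
    show finrank K (LinearMap.range (f + T B)) ≤ r
    rw [hfg, hTapp]
    exact hrk
  have hm' : finrank K (Fin m → K) = m := by
    simp [Module.finrank_pi]
  have hn' : finrank K (Fin n → K) = n := by
    simp [Module.finrank_pi]
  have hdim : finrank K (Fin m → K) ≤ finrank K (Fin n → K) := by rw [hm', hn']; exact hmn
  have hmain := main_bound f hrank hdim W hWcond
  rw [hm', hn', Nat.mul_comm n m] at hmain
  rw [hfr]
  exact hmain
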